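/- Let g be a real symmetric 3×3 matrix and V a real number. Define the endomorphism Φ of the 6-dimensional real vector space of symmetric 3×3 matrices by Φ(S)_{uv} := V Σ_{k,l,i,j} ε_{kiu} ε_{ljv} g_{kl} S_{ij} (for symmetric S and symmetric g the output is again symmetric in (u,v)). Then det Φ = −2 V⁶ (det g)². In particular Φ is invertible if and only if V ≠ 0 and g is invertible. -/

import Mathlib

noncomputable section

/-- The Levi-Civita symbol on `{1,2,3}` (here indexed by `Fin 3`), with `ε 0 1 2 = 1`. -/
def lev (a b c : Fin 3) : ℝ :=
  (((b.val : ℝ) - a.val) * ((c.val : ℝ) - a.val) * ((c.val : ℝ) - b.val)) / 2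

/-- The 6-dimensional real vector space of symmetric 3×3 real matrices,
as a submodule of the space of all 3×3 matrices. -/
def symMat : Submodule ℝ (Matrix (Fin 3) (Fin 3) ℝ) where
  carrier := {S | S.IsSymm}
  add_mem' := fun hS hT => hS.add hT
  zero_mem' := Matrix.isSymm_zero
  smul_mem' := fun c _ hS => hS.smul c

set_option linter.unnecessarySeqFocus false

/-- Coordinates of a symmetric matrix: the six entries on or above the diagonal. -/
private def toCoords : symMat →ₗ[ℝ] (Fin 6 → ℝ) where
  toFun S := ![S.1 0 0, S.1 1 1, S.1 2 2, S.1 0 1, S.1 0 2, S.1 1 2]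
  map_add' S T := by
    funext i
    fin_cases i <;> rfl
  map_smul' c S := by
    funext i
    fin_cases i <;> rfl

/-- The symmetric matrix built from six coordinates. -/
private def ofCoords : (Fin 6 → ℝ) →ₗ[ℝ] symMat where
  toFun c := ⟨!![c 0, c 3, c 4; c 3, c 1, c 5; c 4, c 5, c 2],
    Matrix.IsSymm.ext fun i j => by fin_cases i <;> fin_cases j <;> rfl⟩
  map_add' c d := by
    apply Subtype.ext
    ext i j
    fin_cases i <;> fin_cases j <;> rfl
  map_smul' r c := by
    apply Subtype.ext
    ext i j
    fin_cases i <;> fin_cases j <;> rfl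

/-- The linear equivalence between symmetric 3×3 matrices and `ℝ⁶`. -/
private def symEquiv : symMat ≃ₗ[ℝ] (Fin 6 → ℝ) :=
  LinearEquiv.ofLinear toCoords ofCoords
    (by
      ext c i
      fin_cases i <;> simp [toCoords, ofCoords] <;> rfl)
    (by
      ext S i j
      have h := S.2
      fin_cases i <;> fin_cases j <;>
        simp [toCoords, ofCoords] <;>
        first | rfl | exact (h.apply _ _))

private lemma six0 {α : Type*} (a b c d e f : α) : ![a,b,c,d,e,f] (0 : Fin 6) = a := rfl
private lemma six1 {α : Type*} (a b c d e f : α) : ![a,b,c,d,e,f] (1 : Fin 6) = b := rfl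
private lemma six2 {α : Type*} (a b c d e f : α) : ![a,b,c,d,e,f] (2 : Fin 6) = c := rfl
private lemma six3 {α : Type*} (a b c d e f : α) : ![a,b,c,d,e,f] (3 : Fin 6) = d := rfl
private lemma six4 {α : Type*} (a b c d e f : α) : ![a,b,c,d,e,f] (4 : Fin 6) = e := rfl
private lemma six5 {α : Type*} (a b c d e f : α) : ![a,b,c,d,e,f] (5 : Fin 6) = f := rfl

set_option maxHeartbeats 4000000 in
set_option maxRecDepth 10000 in
/-- Let `g` be a real symmetric 3×3 matrix and `V` a real number.  The endomorphism `Φ`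
of the 6-dimensional space of symmetric 3×3 matrices defined by
`Φ(S)_{uv} = V ∑_{k,l,i,j} ε_{kiu} ε_{ljv} g_{kl} S_{ij}` has determinant
`det Φ = −2 V⁶ (det g)²`; in particular `Φ` is invertible iff `V ≠ 0` and `g` is
invertible. -/
theorem det_symmetric_endomorphism (g : Matrix (Fin 3) (Fin 3) ℝ) (hg : g.IsSymm) (V : ℝ) :
    ∃ Φ : symMat →ₗ[ℝ] symMat,
      (∀ S : symMat, ∀ u v : Fin 3,
        ((Φ S : Matrix (Fin 3) (Fin 3) ℝ)) u v =
          V * ∑ k : Fin 3, ∑ l : Fin 3, ∑ i : Fin 3, ∑ j : Fin 3,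
            lev k i u * lev l j v * g k l * (S : Matrix (Fin 3) (Fin 3) ℝ) i j) ∧
      LinearMap.det Φ = -2 * V ^ 6 * g.det ^ 2 ∧
      (Function.Bijective Φ ↔ (V ≠ 0 ∧ IsUnit g)) := by
  have hg10 : g 1 0 = g 0 1 := hg.apply 0 1
  have hg20 : g 2 0 = g 0 2 := hg.apply 0 2
  have hg21 : g 2 1 = g 1 2 := hg.apply 1 2
  set Mm : Matrix (Fin 6) (Fin 6) ℝ :=
    !![0, V * g 2 2, V * g 1 1, 0, 0, -2 * V * g 1 2;
       V * g 2 2, 0, V * g 0 0, 0, -2 * V * g 0 2, 0;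
       V * g 1 1, V * g 0 0, 0, -2 * V * g 0 1, 0, 0;
       0, 0, -(V * g 0 1), -(V * g 2 2), V * g 1 2, V * g 0 2;
       0, -(V * g 0 2), 0, V * g 1 2, -(V * g 1 1), V * g 0 1;
       -(V * g 1 2), 0, 0, V * g 0 2, V * g 0 1, -(V * g 0 0)] with hMm
  have hdetM : Mm.det = -2 * V ^ 6 * g.det ^ 2 := by
    rw [Matrix.det_fin_three, hg10, hg20, hg21, hMm]
    simp only [Matrix.det_succ_row_zero, Fin.sum_univ_succ, Matrix.submatrix_apply,
      Matrix.submatrix_submatrix, Function.comp_apply, Fin.zero_succAbove,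
      Fin.succ_succAbove_zero, Fin.succ_succAbove_succ, Matrix.cons_val_zero,
      Matrix.cons_val_succ, Fin.val_succ, Fin.val_zero, Matrix.det_fin_one,
      Finset.univ_unique, Fin.default_eq_zero, Finset.sum_singleton,
      Matrix.cons_val_fin_one, Matrix.of_apply, pow_succ, pow_zero]
    norm_num [Matrix.vecHead, Matrix.vecTail]
    ring
  have hconj : symEquiv.symm.toLinearMap ∘ₗ (Matrix.toLin' Mm) ∘ₗ symEquiv.toLinearMap
      = (symEquiv.symm : (Fin 6 → ℝ) ≃ₗ[ℝ] symMat).toLinearMap ∘ₗ (Matrix.toLin' Mm)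
        ∘ₗ ((symEquiv.symm).symm : symMat ≃ₗ[ℝ] (Fin 6 → ℝ)).toLinearMap := rfl
  have hdet : LinearMap.det
      (symEquiv.symm.toLinearMap ∘ₗ (Matrix.toLin' Mm) ∘ₗ symEquiv.toLinearMap)
      = -2 * V ^ 6 * g.det ^ 2 := by
    rw [hconj, LinearMap.det_conj, LinearMap.det_toLin', hdetM]
  refine ⟨symEquiv.symm.toLinearMap ∘ₗ (Matrix.toLin' Mm) ∘ₗ symEquiv.toLinearMap, ?_, hdet, ?_⟩
  · intro S u v
    have h10 : S.1 1 0 = S.1 0 1 := S.2.apply 0 1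
    have h20 : S.1 2 0 = S.1 0 2 := S.2.apply 0 2
    have h21 : S.1 2 1 = S.1 1 2 := S.2.apply 1 2
    fin_cases u <;> fin_cases v <;>
    · simp only [LinearMap.comp_apply, LinearEquiv.coe_coe, symEquiv,
        LinearEquiv.ofLinear_apply, LinearEquiv.ofLinear_symm_apply, toCoords, ofCoords,
        LinearMap.coe_mk, AddHom.coe_mk, Matrix.toLin'_apply, hMm, Matrix.mulVec,
        dotProduct, Fin.sum_univ_six, Fin.sum_univ_three, Matrix.of_apply,
        six0, six1, six2, six3, six4, six5,
        Matrix.cons_val_zero, Matrix.cons_val_one, Matrix.head_cons]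
      norm_num [lev, h10, h20, h21, hg10, hg20, hg21]
      ring
  · set Φ := symEquiv.symm.toLinearMap ∘ₗ (Matrix.toLin' Mm) ∘ₗ symEquiv.toLinearMap with hΦ
    have hdet' : LinearMap.det Φ = -2 * V ^ 6 * g.det ^ 2 := hdet
    have key : LinearMap.det Φ ≠ 0 ↔ (V ≠ 0 ∧ IsUnit g) := by
      rw [hdet', Matrix.isUnit_iff_isUnit_det, isUnit_iff_ne_zero]
      constructor
      · intro h
        constructor
        · intro hV; apply h; rw [hV]; ring
        · intro hgdet; apply h; rw [hgdet]; ring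
      · rintro ⟨hV, hgdet⟩
        intro h
        have h2 : V ^ 6 * g.det ^ 2 ≠ 0 :=
          mul_ne_zero (pow_ne_zero _ hV) (pow_ne_zero _ hgdet)
        apply h2
        have : (-2 : ℝ) * (V ^ 6 * g.det ^ 2) = 0 := by linarith [h, mul_assoc (-2 : ℝ) (V ^ 6) (g.det ^ 2)]
        have hne : (-2 : ℝ) ≠ 0 := by norm_num
        exact (mul_eq_zero.mp this).resolve_left hne
    rw [← key]
    constructor
    · intro hb
      have := LinearEquiv.isUnit_det' (LinearEquiv.ofBijective Φ hb)
      exact isUnit_iff_ne_zero.mp this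
    · intro hd
      have hb : Function.Bijective ⇑((Φ.equivOfDetNeZero hd : symMat →ₗ[ℝ] symMat)) :=
        (Φ.equivOfDetNeZero hd).bijective
      rwa [show ((Φ.equivOfDetNeZero hd : symMat →ₗ[ℝ] symMat)) = Φ from
        LinearEquiv.coe_ofIsUnitDet _] at hb
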